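/- Let Λ be a level-sentence set, A a set of sentences, and φ a sentence with A ⊬ φ ↔ ψ for all ψ ∈ ¬Λ. If T is any theory consistent with A ∪ {φ} ∪ Th_Λ(A ∪ {¬φ}), then there exist complete consistent theories T⁺ ⊇ T ∪ A ∪ {φ} and T⁻ ⊇ A ∪ {¬φ} with Λ ∩ T⁻ ⊆ Λ ∩ T⁺. -/

import Mathlib

open FirstOrder FirstOrder.Language

/-- `QHier b k φ`: `φ` is a `∃ₖ`-formula (if `b = true`) or a `∀ₖ`-formula (if `b = false`),
i.e. a prenex formula with at most `k` alternating quantifier blocks, beginning with `∃`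
(resp. `∀`). -/
inductive QHier {L : FirstOrder.Language} {α : Type} : Bool → ℕ → {n : ℕ} → L.BoundedFormula α n → Prop
  | qf {b k n} {φ : L.BoundedFormula α n} : φ.IsQF → QHier b k φ
  | ex {k n} {φ : L.BoundedFormula α (n + 1)} : QHier true (k + 1) φ → QHier true (k + 1) φ.ex
  | all {k n} {φ : L.BoundedFormula α (n + 1)} : QHier false (k + 1) φ → QHier false (k + 1) φ.all
  | dual {b k n} {φ : L.BoundedFormula α n} : QHier (!b) k φ → QHier b (k + 1) φ

/-- The set of `∃ₖ`-sentences of `L`. -/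
def ExSet (L : FirstOrder.Language) (k : ℕ) : Set L.Sentence := {φ | QHier true k φ}
/-- The set of `∀ₖ`-sentences of `L`. -/
def AllSet (L : FirstOrder.Language) (k : ℕ) : Set L.Sentence := {φ | QHier false k φ}

/-- A level-sentence set: the set of `∃ₖ`- or of `∀ₖ`-sentences for some `k`. -/
def IsLevelSet {L : FirstOrder.Language} (Λ : Set L.Sentence) : Prop :=
  ∃ k, Λ = ExSet L k ∨ Λ = AllSet L k

/-- `¬Λ`: the set of sentences (logically) equivalent to the negation of a sentence in `Λ`. -/
def NegOf {L : FirstOrder.Language} (Λ : Set L.Sentence) : Set L.Sentence :=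
  {ψ | ∃ χ ∈ Λ, (∅ : L.Theory) ⊨ᵇ ψ.iff χ.not}

/-- `Th_Λ(S)`: the set of `Λ`-sentences provable from (equivalently, entailed by) `S`. -/
def ThL {L : FirstOrder.Language} (Λ : Set L.Sentence) (S : L.Theory) : Set L.Sentence :=
  {ψ ∈ Λ | S ⊨ᵇ ψ}

universe u v

namespace QHAux

variable {L : FirstOrder.Language.{u, v}} {α : Type}

open FirstOrder.Language.BoundedFormula

theorem liftAt_not {n m : ℕ} (φ : L.BoundedFormula α n) :
    (φ.not.liftAt 1 m) = (φ.liftAt 1 m).not := rfl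

theorem liftAt_all {n m : ℕ} (φ : L.BoundedFormula α (n + 1)) :
    (φ.all.liftAt 1 m) = (φ.liftAt 1 m).all := by
  simp only [BoundedFormula.liftAt, BoundedFormula.mapTermRel, BoundedFormula.castLE_rfl]

theorem liftAt_ex {n m : ℕ} (φ : L.BoundedFormula α (n + 1)) :
    (φ.ex.liftAt 1 m) = (φ.liftAt 1 m).ex := by
  rw [BoundedFormula.ex, BoundedFormula.ex, ← liftAt_not, ← liftAt_all, ← liftAt_not]

theorem QHier.liftAt' {b : Bool} {k n : ℕ} {φ : L.BoundedFormula α n} (h : QHier b k φ) (m : ℕ) :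
    QHier b k (φ.liftAt 1 m) := by
  induction h with
  | qf h => exact .qf h.liftAt
  | ex h ih => rw [liftAt_ex]; exact .ex ih
  | all h ih => rw [liftAt_all]; exact .all ih
  | dual h ih => exact .dual ih

/-- `χ` is logically equivalent (over nonempty structures) to `φ ⊔ ψ`. -/
def EqvOr {n : ℕ} (χ φ ψ : L.BoundedFormula α n) : Prop :=
  ∀ (M : Type (max u v)) [L.Structure M] [Nonempty M] (v : α → M) (xs : Fin n → M),
    χ.Realize v xs ↔ φ.Realize v xs ∨ ψ.Realize v xs

theorem cross {b : Bool} {k n : ℕ} {ψ : L.BoundedFormula α n} (h2 : QHier b k ψ) :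
    ∀ j : ℕ, k = j + 1 →
    (∀ (b' : Bool) (n' : ℕ) (φ' ψ' : L.BoundedFormula α n'), QHier b' j φ' → QHier b' j ψ' →
      ∃ χ, QHier b' j χ ∧ EqvOr χ φ' ψ') →
    ∀ φ : L.BoundedFormula α n, QHier (!b) j φ →
    ∃ χ, QHier b k χ ∧ EqvOr χ φ ψ := by
  induction h2 with
  | @qf b k n ψ hψ =>
    intro j hkj clos φ hφ
    subst hkj
    obtain ⟨χ, hχ, he⟩ := clos (!b) n φ ψ hφ (.qf hψ)
    refine ⟨χ, ?_, he⟩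
    have := hχ.dual
    simpa using this
  | @ex k0 n ψ₀ h2' ih =>
    intro j hkj clos φ hφ
    obtain ⟨χ₀, hχ₀, he⟩ := ih j hkj clos (φ.liftAt 1 n) (QHier.liftAt' hφ n)
    refine ⟨χ₀.ex, .ex hχ₀, fun M _ _ v xs => ?_⟩
    simp only [realize_ex, he M v, realize_liftAt_one_self, Fin.snoc_comp_castSucc]
    rw [exists_or, exists_const]
  | @all k0 n ψ₀ h2' ih =>
    intro j hkj clos φ hφ
    obtain ⟨χ₀, hχ₀, he⟩ := ih j hkj clos (φ.liftAt 1 n) (QHier.liftAt' hφ n)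
    refine ⟨χ₀.all, .all hχ₀, fun M _ _ v xs => ?_⟩
    simp only [realize_all, he M v, realize_liftAt_one_self, Fin.snoc_comp_castSucc]
    rw [forall_or_left]
  | @dual b k0 n ψ h2' ih =>
    intro j hkj clos φ hφ
    obtain rfl : k0 = j := Nat.succ_injective hkj
    obtain ⟨χ, hχ, he⟩ := clos (!b) n φ ψ hφ h2'
    exact ⟨χ, hχ.dual, he⟩

theorem sup_closure (k : ℕ) :
    ∀ {b : Bool} {k' n : ℕ} (φ : L.BoundedFormula α n), QHier b k' φ → k' ≤ k →
      ∀ ψ : L.BoundedFormula α n, QHier b k' ψ →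
        ∃ χ, QHier b k' χ ∧ EqvOr χ φ ψ := by
  induction k with
  | zero =>
    intro b k' n φ h1 hk ψ h2
    obtain rfl : k' = 0 := Nat.le_zero.mp hk
    cases h1 with
    | qf hφ =>
      cases h2 with
      | qf hψ =>
        exact ⟨φ ⊔ ψ, .qf ((hφ.imp isQF_bot).imp hψ), fun M _ _ v xs => realize_sup⟩
  | succ k IHk =>
    intro b k' n φ h1
    induction h1 with
    | @qf b k' n φ hφ =>
      intro hk ψ h2
      match k', hk, h2 with
      | 0, _, h2 =>
        cases h2 with
        | qf hψ =>
          exact ⟨φ ⊔ ψ, .qf ((hφ.imp isQF_bot).imp hψ), fun M _ _ v xs => realize_sup⟩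
      | j + 1, hk, h2 =>
        exact cross h2 j rfl
          (fun b' n' φ' ψ' hφ' hψ' => IHk φ' hφ' (Nat.lt_succ_iff.mp hk) ψ' hψ') φ (.qf hφ)
    | @ex k0 n φ₀ h1' ih =>
      intro hk ψ h2
      obtain ⟨χ₀, hχ₀, he⟩ := ih hk (ψ.liftAt 1 n) (QHier.liftAt' h2 n)
      refine ⟨χ₀.ex, .ex hχ₀, fun M _ _ v xs => ?_⟩
      simp only [realize_ex, he M v, realize_liftAt_one_self, Fin.snoc_comp_castSucc]
      rw [exists_or, exists_const]
    | @all k0 n φ₀ h1' ih =>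
      intro hk ψ h2
      obtain ⟨χ₀, hχ₀, he⟩ := ih hk (ψ.liftAt 1 n) (QHier.liftAt' h2 n)
      refine ⟨χ₀.all, .all hχ₀, fun M _ _ v xs => ?_⟩
      simp only [realize_all, he M v, realize_liftAt_one_self, Fin.snoc_comp_castSucc]
      rw [forall_or_right]
    | @dual b k0 n φ h1' =>
      intro hk ψ h2
      exact cross h2 k0 rfl
        (fun b' n' φ' ψ' hφ' hψ' => IHk φ' hφ' (Nat.lt_succ_iff.mp hk) ψ' hψ') φ h1'

theorem sup_list (b : Bool) (k : ℕ) (l : List (L.Sentence)) (h : ∀ ψ ∈ l, QHier b k ψ) :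
    ∃ χ : L.Sentence, QHier b k χ ∧
      ∀ (M : Type (max u v)) [L.Structure M] [Nonempty M],
        (M ⊨ χ ↔ ∃ ψ ∈ l, M ⊨ ψ) := by
  induction l with
  | nil =>
    exact ⟨⊥, .qf isQF_bot, fun M _ _ => by simp [Sentence.Realize]⟩
  | cons ψ l ih =>
    obtain ⟨χ₀, hχ₀, he₀⟩ := ih (fun ψ' h' => h ψ' (List.mem_cons_of_mem _ h'))
    obtain ⟨χ, hχ, he⟩ := sup_closure k ψ (h ψ List.mem_cons_self) le_rfl χ₀ hχ₀
    refine ⟨χ, hχ, fun M _ _ => ?_⟩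
    have h1 : M ⊨ χ ↔ (M ⊨ ψ ∨ M ⊨ χ₀) := he M default default
    rw [h1, he₀ M]
    simp

theorem not_injective : Function.Injective (fun ψ : L.Sentence => ψ.not) := by
  intro a b h
  injection h

end QHAux

open QHAux

/-- If `A ⊬ φ ↔ ψ` for every `ψ ∈ ¬Λ` and `T` is consistent with
`A ∪ {φ} ∪ Th_Λ(A ∪ {¬φ})`, then there are complete consistent theories
`T⁺ ⊇ T ∪ A ∪ {φ}` and `T⁻ ⊇ A ∪ {¬φ}` with `Λ ∩ T⁻ ⊆ Λ ∩ T⁺`. -/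
theorem statement3 {L : FirstOrder.Language} (Λ : Set L.Sentence) (A : L.Theory) (φ : L.Sentence)
    (hΛ : IsLevelSet Λ) (hφ : ∀ ψ ∈ NegOf Λ, ¬ A ⊨ᵇ (φ.iff ψ))
    (T : L.Theory) (hT : (T ∪ (A ∪ {φ} ∪ ThL Λ (A ∪ {φ.not}))).IsSatisfiable) :
    ∃ Tp Tm : L.Theory, Tp.IsMaximal ∧ Tm.IsMaximal ∧
      T ∪ A ∪ {φ} ⊆ Tp ∧ A ∪ {φ.not} ⊆ Tm ∧ Λ ∩ Tm ⊆ Λ ∩ Tp := by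
  classical
  obtain ⟨k, hk⟩ := hΛ
  have hΛ' : ∃ b : Bool, Λ = {σ : L.Sentence | QHier b k σ} := by
    rcases hk with h | h
    exacts [⟨true, h⟩, ⟨false, h⟩]
  obtain ⟨b, rfl⟩ := hΛ'
  obtain ⟨M⟩ := hT
  set Λb : Set L.Sentence := {σ : L.Sentence | QHier b k σ} with hΛb
  set Sp : L.Theory := T ∪ (A ∪ {φ} ∪ ThL Λb (A ∪ {φ.not})) with hSp
  have hSpTp : Sp ⊆ L.completeTheory M := fun σ hσ =>
    mem_completeTheory.2 (Sp.realize_sentence_of_mem hσ)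
  set B : Set L.Sentence := {ψ | QHier b k ψ ∧ ψ ∉ L.completeTheory M} with hB
  set Sm : L.Theory := (A ∪ {Formula.not φ}) ∪ (fun ψ : L.Sentence => ψ.not) '' B with hSmdef
  have hSm : Sm.IsSatisfiable := by
    rw [Theory.isSatisfiable_iff_isFinitelySatisfiable]
    intro T0 hT0
    set C : Set L.Sentence := {ψ | ψ ∈ B ∧ ψ.not ∈ (T0 : L.Theory)} with hC
    have hCfin : C.Finite := by
      have hsub : C ⊆ (fun ψ : L.Sentence => ψ.not) ⁻¹' (T0 : Set L.Sentence) :=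
        fun ψ hψ => hψ.2
      exact Set.Finite.subset (T0.finite_toSet.preimage not_injective.injOn) hsub
    have hmeml : ∀ {ψ : L.Sentence}, ψ ∈ hCfin.toFinset.toList ↔ ψ ∈ C := by
      intro ψ; simp [Set.Finite.mem_toFinset]
    obtain ⟨χ, hχQ, hχe⟩ := sup_list b k hCfin.toFinset.toList
      (fun ψ hψ => (hmeml.1 hψ).1.1)
    have hnm : ¬ ((A ∪ {Formula.not φ}) ⊨ᵇ χ) := by
      intro hmod
      have hmem : χ ∈ L.completeTheory M := hSpTp (Or.inr (Or.inr ⟨hχQ, hmod⟩))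
      obtain ⟨ψ, hψl, hψM⟩ := (hχe M).1 (mem_completeTheory.1 hmem)
      exact (hmeml.1 hψl).1.2 (mem_completeTheory.2 hψM)
    rw [Theory.models_sentence_iff] at hnm
    push_neg at hnm
    obtain ⟨N, hN⟩ := hnm
    haveI : N ⊨ (T0 : L.Theory) := by
      rw [Theory.model_iff]
      intro σ hσT0
      rcases hT0 hσT0 with hσ | hσ
      · exact (A ∪ {Formula.not φ}).realize_sentence_of_mem hσ
      · obtain ⟨ψ, hψB, rfl⟩ := hσ
        have hψC : ψ ∈ C := ⟨hψB, hσT0⟩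
        have hnψ : ¬ (N ⊨ ψ) := fun hNψ => hN ((hχe N).2 ⟨ψ, hmeml.2 hψC, hNψ⟩)
        simpa [Sentence.Realize] using hnψ
    exact Theory.Model.isSatisfiable N
  obtain ⟨N'⟩ := hSm
  have hSmTm : Sm ⊆ L.completeTheory N' := fun σ hσ =>
    mem_completeTheory.2 (Sm.realize_sentence_of_mem hσ)
  refine ⟨L.completeTheory M, L.completeTheory N', completeTheory.isMaximal L M,
    completeTheory.isMaximal L N', ?_, ?_, ?_⟩
  · intro σ hσ
    apply hSpTp
    rcases hσ with (h | h) | h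
    · exact Or.inl h
    · exact Or.inr (Or.inl (Or.inl h))
    · exact Or.inr (Or.inl (Or.inr h))
  · exact fun σ hσ => hSmTm (Or.inl hσ)
  · rintro ψ ⟨hψΛ, hψTm⟩
    refine ⟨hψΛ, ?_⟩
    by_contra hnot
    have h1 : ψ.not ∈ L.completeTheory N' := hSmTm (Or.inr ⟨ψ, ⟨hψΛ, hnot⟩, rfl⟩)
    have h2 : (N' : Type _) ⊨ ψ := mem_completeTheory.1 hψTm
    have h3 : (N' : Type _) ⊨ ψ.not := mem_completeTheory.1 h1
    simp [Sentence.Realize] at h3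
    exact h3 h2
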